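/- Let W be a finite-dimensional complex vector space with conjugation σ and real points V, let (A, C) be a weight-2 Hodge decomposition of (W, σ), and let Q : W → W → ℂ be a ℂ-bilinear form such that: (i) Q(σ u, σ v) = conj(Q(u, v)); (ii) Q(u, v) = Q(v, u); (iii) Q(u, v) = 0 whenever u, v ∈ A, or u ∈ A and v ∈ C, or u ∈ C and v ∈ σ(A), or u, v ∈ σ(A); (iv) for every nonzero u ∈ A the number −Q(u, σ u) is a positive real, and for every nonzero w ∈ C the number Q(w, σ w) is a positive real. Set H := {a + σ(a) | a ∈ A} and F := {w ∈ C | σ(w) = w}, and let I be the operator on H with I(a + σ(a)) = (i • a) + σ(i • a). Then Q is real-valued on V × V; the restriction of Q to H is negative definite and I-invariant (Q(I x, I y) = Q(x, y) for x, y ∈ H); the restriction of Q to F is positive definite; and Q(x, y) = 0 for all x ∈ H, y ∈ F. -/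
import Mathlib


/-- A weight-2 Hodge decomposition of `(W, σ)`: a pair of complex subspaces
`A, C ⊆ W` with `W = A ⊕ C ⊕ σ(A)` (every `w ∈ W` has a unique expression
`w = a + c + σ a'` with `a, a' ∈ A`, `c ∈ C`) and `σ(C) = C`. -/
def IsHodge2 {W : Type*} [AddCommGroup W] [Module ℂ W] (σ : W →ₗ[ℝ] W)
    (A C : Submodule ℂ W) : Prop :=
  (∀ w : W, ∃! t : W × W × W,
      t.1 ∈ A ∧ t.2.1 ∈ C ∧ t.2.2 ∈ A ∧ w = t.1 + t.2.1 + σ t.2.2) ∧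
  σ '' (C : Set W) = (C : Set W)

/-- **A polarization of a weight-2 Hodge structure yields a CR Hermitian structure.**
Let `W` be a finite-dimensional complex vector space with conjugation `σ` and real points
`V = {w | σ w = w}`, let `(A, C)` be a weight-2 Hodge decomposition, and let `Q` be a
symmetric `ℂ`-bilinear form satisfying the polarization conditions (i)–(iv).  Put
`H := {a + σ a | a ∈ A}` and `F := {w ∈ C | σ w = w}`, and let `I` restrict on `H` to the
operator `a + σ a ↦ i • a + σ (i • a)`.  Then `Q` is real on `V × V`; `Q|_H` is negative
definite and `I`-invariant; `Q|_F` is positive definite; and `H ⟂ F` w.r.t. `Q`. -/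
theorem polarized_weight_two_gives_CR_hermitian
    {W : Type*} [AddCommGroup W] [Module ℂ W] [FiniteDimensional ℂ W]
    (σ : W →ₗ[ℝ] W)
    (hinv : ∀ w : W, σ (σ w) = w)
    (hconj : ∀ (c : ℂ) (w : W), σ (c • w) = (starRingEnd ℂ) c • σ w)
    (A C : Submodule ℂ W) (hAC : IsHodge2 σ A C)
    (Q : W →ₗ[ℂ] W →ₗ[ℂ] ℂ)
    (hQconj : ∀ u v : W, Q (σ u) (σ v) = (starRingEnd ℂ) (Q u v))
    (hQsymm : ∀ u v : W, Q u v = Q v u)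
    (hQAA : ∀ u ∈ A, ∀ v ∈ A, Q u v = 0)
    (hQAC : ∀ u ∈ A, ∀ v ∈ C, Q u v = 0)
    (hQCσA : ∀ u ∈ C, ∀ a ∈ A, Q u (σ a) = 0)
    (hQσAσA : ∀ a ∈ A, ∀ a' ∈ A, Q (σ a) (σ a') = 0)
    (hQposA : ∀ u ∈ A, u ≠ 0 → ∃ r : ℝ, 0 < r ∧ -Q u (σ u) = (r : ℂ))
    (hQposC : ∀ w ∈ C, w ≠ 0 → ∃ r : ℝ, 0 < r ∧ Q w (σ w) = (r : ℂ))
    (I : W →ₗ[ℝ] W)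
    (hI : ∀ a ∈ A, I (a + σ a) = Complex.I • a + σ (Complex.I • a)) :
    (∀ x y : W, σ x = x → σ y = y → (Q x y).im = 0) ∧
    (∀ x ∈ {w : W | ∃ a ∈ A, w = a + σ a}, x ≠ 0 → (Q x x).re < 0) ∧
    (∀ x ∈ {w : W | ∃ a ∈ A, w = a + σ a}, ∀ y ∈ {w : W | ∃ a ∈ A, w = a + σ a},
      Q (I x) (I y) = Q x y) ∧
    (∀ x ∈ C, σ x = x → x ≠ 0 → 0 < (Q x x).re) ∧
    (∀ x ∈ {w : W | ∃ a ∈ A, w = a + σ a}, ∀ y ∈ C, σ y = y → Q x y = 0) := by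
  have expand : ∀ u ∈ A, ∀ v ∈ A, Q (u + σ u) (v + σ v) = Q u (σ v) + Q v (σ u) := by
    intro u hu v hv
    simp only [map_add, LinearMap.add_apply, hQAA u hu v hv, hQσAσA u hu v hv,
      hQsymm (σ u) v]
    ring
  refine ⟨?_, ?_, ?_, ?_, ?_⟩
  · intro x y hx hy
    have h := hQconj x y
    rw [hx, hy] at h
    exact Complex.conj_eq_iff_im.mp h.symm
  · rintro x ⟨a, ha, rfl⟩ hx
    have ha0 : a ≠ 0 := by rintro rfl; simp at hx
    obtain ⟨r, hr, hQ⟩ := hQposA a ha ha0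
    have hQa : Q a (σ a) = -(r : ℂ) := by linear_combination -hQ
    rw [expand a ha a ha, hQa]
    simp only [Complex.add_re, Complex.neg_re, Complex.ofReal_re]
    linarith
  · rintro x ⟨a, ha, rfl⟩ y ⟨b, hb, rfl⟩
    rw [hI a ha, hI b hb]
    have hia : Complex.I • a ∈ A := A.smul_mem _ ha
    have hib : Complex.I • b ∈ A := A.smul_mem _ hb
    rw [expand _ hia _ hib, expand _ ha _ hb, hconj, hconj]
    simp only [map_smul, LinearMap.smul_apply, smul_eq_mul, Complex.conj_I]
    ring_nf
    simp [Complex.I_sq]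
  · intro x hx hxσ hx0
    obtain ⟨r, hr, hQ⟩ := hQposC x hx hx0
    rw [hxσ] at hQ
    rw [hQ]
    simpa using hr
  · rintro x ⟨a, ha, rfl⟩ y hy hyσ
    have h1 : Q a y = 0 := hQAC a ha y hy
    have h2 : Q (σ a) y = 0 := by
      rw [hQsymm]; exact hQCσA y hy a ha
    simp [map_add, LinearMap.add_apply, h1, h2]
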